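/- Let (X,𝒳,μ) be a σ-finite measure space with countably generated 𝒳, (φ_i) an orthonormal basis of L²(X,μ), π_m the projection onto lin(φ₁,...,φ_m), X_l ∈ 𝒳 with μ(X_l) < ∞, and π_{m,l,k} the conditional-expectation-type projection defined by averaging π_m(f)·𝟏_{X_l} over the cells of the finite partition P_{m,k} generated by dyadic level sets {j·2^{−k} < φ_i ≤ (j+1)·2^{−k}}, |j| ≤ 2^{2k}, of φ₁,...,φ_m (together with the tail sets {φ_i ≤ −2^k} and {φ_i > 2^k}). Then for every f ∈ L²(X,μ), lim_{k→∞} π_{m,l,k}(f) = π_m(f)·𝟏_{X_l} in L²(X,μ). -/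

import Mathlib

open MeasureTheory Filter
open scoped ENNReal BigOperators Topology

section Aux

lemma sq_add_le' (a b : ℝ≥0∞) : (a + b)^2 ≤ 4*(a^2 + b^2) := by
  rcases le_total a b with h | h
  · calc (a+b)^2 ≤ (b+b)^2 := by gcongr
      _ = 4*b^2 := by ring
      _ ≤ 4*(a^2+b^2) := by gcongr; exact le_add_self
  · calc (a+b)^2 ≤ (a+a)^2 := by gcongr
      _ = 4*a^2 := by ring
      _ ≤ 4*(a^2+b^2) := by gcongr; exact le_self_add

lemma avg_dist_le' {X : Type*} [MeasurableSpace X] {μ : Measure X} {S : Set X}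
    (hSm : MeasurableSet S) (h0 : μ S ≠ 0) (ht : μ S ≠ ∞) {g : X → ℝ}
    (hg : IntegrableOn g S μ) {x : X} (hx : x ∈ S) {ε : ℝ}
    (h : ∀ y ∈ S, |g y - g x| ≤ ε) :
    |(μ S).toReal⁻¹ * ∫ y in S, g y ∂μ - g x| ≤ ε := by
  have hpos : 0 < (μ S).toReal := ENNReal.toReal_pos h0 ht
  have hfin : IsFiniteMeasure (μ.restrict S) := by
    constructor; rw [Measure.restrict_apply_univ]; exact lt_of_le_of_ne le_top ht
  have hconst : IntegrableOn (fun _ => g x) S μ :=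
    integrableOn_const ht
  have key : ∫ y in S, (g y - g x) ∂μ = (∫ y in S, g y ∂μ) - (μ S).toReal * g x := by
    rw [integral_sub hg hconst, setIntegral_const, smul_eq_mul]; rfl
  have hb : ‖∫ y in S, (g y - g x) ∂μ‖ ≤ ε * (μ S).toReal := by
    apply norm_setIntegral_le_of_norm_le_const (lt_of_le_of_ne le_top ht)
    intro y hy; simpa [Real.norm_eq_abs] using h y hy
  have heq : (μ S).toReal⁻¹ * ∫ y in S, g y ∂μ - g x
      = (μ S).toReal⁻¹ * ∫ y in S, (g y - g x) ∂μ := by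
    rw [key]; field_simp
  rw [heq, abs_mul, abs_of_nonneg (by positivity)]
  calc (μ S).toReal⁻¹ * |∫ y in S, (g y - g x) ∂μ|
      ≤ (μ S).toReal⁻¹ * (ε * (μ S).toReal) := by
        gcongr; simpa [Real.norm_eq_abs] using hb
    _ = ε := by field_simp

lemma enorm_avg_le' {X : Type*} [MeasurableSpace X] {μ : Measure X} {S : Set X}
    (h0 : μ S ≠ 0) (ht : μ S ≠ ∞) (g : X → ℝ) :
    (‖(μ S).toReal⁻¹ * ∫ y in S, g y ∂μ‖₊ : ℝ≥0∞)
      ≤ (μ S)⁻¹ * ∫⁻ y in S, (‖g y‖₊ : ℝ≥0∞) ∂μ := by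
  have h1 : (‖(μ S).toReal⁻¹‖₊ : ℝ≥0∞) = (μ S)⁻¹ := by
    rw [Real.nnnorm_of_nonneg (by positivity)]
    rw [← ENNReal.ofReal_toReal ht]
    rw [← ENNReal.ofReal_inv_of_pos (ENNReal.toReal_pos h0 ht)]
    simp [ENNReal.ofReal, Real.toNNReal_of_nonneg]
  calc (‖(μ S).toReal⁻¹ * ∫ y in S, g y ∂μ‖₊ : ℝ≥0∞)
      = (‖(μ S).toReal⁻¹‖₊ : ℝ≥0∞) * (‖∫ y in S, g y ∂μ‖₊ : ℝ≥0∞) := by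
        rw [nnnorm_mul]; push_cast; ring
    _ ≤ (μ S)⁻¹ * ∫⁻ y in S, (‖g y‖₊ : ℝ≥0∞) ∂μ := by
        rw [h1]; gcongr
        exact enorm_integral_le_lintegral_enorm _

lemma rpow_two' (a : ℝ≥0∞) : a ^ (2:ℝ) = a ^ (2:ℕ) := by
  rw [← ENNReal.rpow_natCast]; norm_num

lemma sq_setLintegral_le {X : Type*} [MeasurableSpace X] {μ : Measure X} (S : Set X)
    {F : X → ℝ≥0∞} (hF : Measurable F) :
    (∫⁻ x in S, F x ∂μ)^2 ≤ (∫⁻ x in S, (F x)^2 ∂μ) * μ S := by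
  have hconj : (2:ℝ).HolderConjugate 2 := Real.HolderConjugate.two_two
  have h := ENNReal.lintegral_mul_le_Lp_mul_Lq (μ.restrict S) hconj
    hF.aemeasurable (aemeasurable_const (b := (1:ℝ≥0∞)))
  simp only [Pi.mul_apply, mul_one, ENNReal.one_rpow, lintegral_const,
    Measure.restrict_apply_univ, one_mul] at h
  calc (∫⁻ x in S, F x ∂μ)^2
      ≤ ((∫⁻ x in S, F x ^ (2:ℝ) ∂μ) ^ (1/(2:ℝ)) * (μ S) ^ (1/(2:ℝ)))^2 := by gcongr
    _ = (∫⁻ x in S, F x ^ (2:ℝ) ∂μ) * μ S := by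
        rw [mul_pow, ← rpow_two', ← rpow_two', ← ENNReal.rpow_mul, ← ENNReal.rpow_mul]
        norm_num
    _ = (∫⁻ x in S, (F x)^2 ∂μ) * μ S := by
        congr 1; exact lintegral_congr fun x => rpow_two' _

/-- index of the dyadic cell containing `r` -/
noncomputable def dyadIdx (k : ℕ) (r : ℝ) : ℤ :=
  if 2^k < r then 2^(2*k) else if r ≤ -(2^k) then -(2^(2*k))-1 else ⌈r * 2^k⌉ - 1

/-- membership condition mirroring `level` -/
def dyadProp (k : ℕ) (a : ℤ) (r : ℝ) : Prop :=
  if a = 2^(2*k) then (2:ℝ)^k < r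
  else if a = -(2^(2*k))-1 then r ≤ -((2:ℝ)^k)
  else ((a:ℝ)/2^k < r ∧ r ≤ ((a:ℝ)+1)/2^k)

lemma two_pow_two_mul (k : ℕ) : (2:ℝ)^(2*k) = 2^k * 2^k := by
  rw [two_mul, pow_add]

lemma dyadIdx_mid_bounds {k : ℕ} {r : ℝ} (h1 : ¬ 2^k < r) (h2 : ¬ r ≤ -(2^k)) :
    -(2^(2*k) : ℤ) ≤ ⌈r * 2^k⌉ - 1 ∧ ⌈r * 2^k⌉ - 1 ≤ 2^(2*k) - 1 := by
  push_neg at h1 h2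
  have hpos : (0:ℝ) < 2^k := by positivity
  constructor
  · have h3 : -((2:ℝ)^(2*k)) < ⌈r * 2^k⌉ := by
      calc -((2:ℝ)^(2*k)) = -(2^k) * 2^k := by rw [two_pow_two_mul]; ring
        _ < r * 2^k := by apply mul_lt_mul_of_pos_right h2 hpos
        _ ≤ ⌈r * 2^k⌉ := Int.le_ceil _
    have : -(2^(2*k) : ℤ) < ⌈r * 2^k⌉ := by
      exact_mod_cast (by push_cast; linarith : (-(2^(2*k):ℤ) : ℝ) < (⌈r * 2^k⌉ : ℝ))
    omega
  · have : ⌈r * 2^k⌉ ≤ (2^(2*k) : ℤ) := by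
      apply Int.ceil_le.2
      push_cast
      calc r * 2^k ≤ 2^k * 2^k := by apply mul_le_mul_of_nonneg_right h1 hpos.le
        _ = (2:ℝ)^(2*k) := (two_pow_two_mul k).symm
    omega

lemma dyadIdx_mem_Icc (k : ℕ) (r : ℝ) :
    dyadIdx k r ∈ Finset.Icc (-(2^(2*k))-1 : ℤ) (2^(2*k)) := by
  have hL : (0:ℤ) < 2^(2*k) := by positivity
  rw [Finset.mem_Icc]
  unfold dyadIdx
  split_ifs with h1 h2
  · omega
  · omega
  · have := dyadIdx_mid_bounds h1 h2
    omega

lemma dyadProp_dyadIdx (k : ℕ) (r : ℝ) : dyadProp k (dyadIdx k r) r := by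
  have hL : (0:ℤ) < 2^(2*k) := by positivity
  have hpos : (0:ℝ) < 2^k := by positivity
  unfold dyadIdx
  split_ifs with h1 h2
  · unfold dyadProp; rw [if_pos rfl]; exact h1
  · unfold dyadProp; rw [if_neg (by omega), if_pos rfl]; exact h2
  · have hb := dyadIdx_mid_bounds h1 h2
    unfold dyadProp
    rw [if_neg (by omega), if_neg (by omega)]
    push_neg at h1 h2
    constructor
    · rw [div_lt_iff₀ hpos]
      push_cast
      have := Int.ceil_lt_add_one (r * 2^k)
      linarith
    · rw [le_div_iff₀ hpos]
      push_cast
      have := Int.le_ceil (r * 2^k)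
      linarith

lemma dyadProp_unique (k : ℕ) (a : ℤ) (r : ℝ)
    (ha : a ∈ Finset.Icc (-(2^(2*k))-1 : ℤ) (2^(2*k))) (h : dyadProp k a r) :
    a = dyadIdx k r := by
  have hL : (0:ℤ) < 2^(2*k) := by positivity
  have hpos : (0:ℝ) < 2^k := by positivity
  rw [Finset.mem_Icc] at ha
  unfold dyadProp at h
  unfold dyadIdx
  split_ifs at h with h1 h2
  · rw [if_pos h]; exact h1
  · rw [if_neg (by push_neg; linarith), if_pos h]; exact h2
  · obtain ⟨hlo, hhi⟩ := h
    have ha1 : a ≤ 2^(2*k) - 1 := by omega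
    have ha2 : -(2^(2*k):ℤ) ≤ a := by omega
    have hrle : r ≤ 2^k := by
      calc r ≤ ((a:ℝ)+1)/2^k := hhi
        _ ≤ (2:ℝ)^(2*k) / 2^k := by
            gcongr
            have : ((a:ℝ)) ≤ (2:ℝ)^(2*k) - 1 := by exact_mod_cast ha1
            linarith
        _ = 2^k := by rw [two_pow_two_mul]; field_simp
    have hrgt : -((2:ℝ)^k) < r := by
      calc -((2:ℝ)^k) = -((2:ℝ)^(2*k)) / 2^k := by rw [two_pow_two_mul]; field_simp
        _ ≤ (a:ℝ)/2^k := by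
            gcongr
            exact_mod_cast ha2
        _ < r := hlo
    rw [if_neg (by push_neg; exact hrle), if_neg (by push_neg; exact hrgt)]
    have : ⌈r * 2^k⌉ = a + 1 := by
      rw [Int.ceil_eq_iff]
      constructor
      · push_cast
        have := (div_lt_iff₀ hpos).1 hlo
        linarith
      · push_cast
        have := (le_div_iff₀ hpos).1 hhi
        linarith
    omega

lemma dyadProp_mid {k : ℕ} {a : ℤ} (h1 : a ≠ 2^(2*k)) (h2 : a ≠ -(2^(2*k))-1) {r : ℝ}
    (h : dyadProp k a r) : (a:ℝ)/2^k < r ∧ r ≤ ((a:ℝ)+1)/2^k := by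
  unfold dyadProp at h
  rwa [if_neg h1, if_neg h2] at h

lemma dyadProp_tail {k : ℕ} {a : ℤ} {r : ℝ} (h : dyadProp k a r)
    (ha : a = 2^(2*k) ∨ a = -(2^(2*k))-1) : (2:ℝ)^k ≤ |r| := by
  have hL : (0:ℤ) < 2^(2*k) := by positivity
  unfold dyadProp at h
  rcases ha with ha | ha
  · rw [if_pos ha] at h
    exact (le_abs_self r).trans' h.le
  · rw [if_neg (by omega), if_pos ha] at h
    calc (2:ℝ)^k ≤ -r := by linarith
      _ ≤ |r| := neg_le_abs r

lemma dyad_osc {k : ℕ} {a : ℤ} {r r' : ℝ}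
    (h : (a:ℝ)/2^k < r ∧ r ≤ ((a:ℝ)+1)/2^k)
    (h' : (a:ℝ)/2^k < r' ∧ r' ≤ ((a:ℝ)+1)/2^k) : |r - r'| ≤ 1/2^k := by
  have key : ((a:ℝ)+1)/2^k = (a:ℝ)/2^k + 1/2^k := by ring
  rw [key] at h h'
  rw [abs_sub_le_iff]
  constructor <;> [linarith [h.1, h.2, h'.1, h'.2]; linarith [h.1, h.2, h'.1, h'.2]]

lemma measurableSet_dyadProp (k : ℕ) (a : ℤ) : MeasurableSet {r : ℝ | dyadProp k a r} := by
  unfold dyadProp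
  split_ifs
  · exact measurableSet_Ioi
  · exact measurableSet_Iic
  · exact measurableSet_Ioc

end Aux

/-- Convergence of the conditional-expectation-type projections `π_{m,l,k}` to
`π_m(f)·𝟏_{X_l}` in `L²` as the dyadic partitions refine (`k → ∞`). -/
theorem stmt15 {X : Type*} [MeasurableSpace X] [MeasurableSpace.CountablyGenerated X]
    (μ : Measure X) [SigmaFinite μ]
    (φ : ℕ → X → ℝ) (hφmeas : ∀ i, Measurable (φ i)) (hφL2 : ∀ i, MemLp (φ i) 2 μ)
    (horth : ∀ i j, (∫ x, φ i x * φ j x ∂μ) = if i = j then 1 else 0)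
    (Xl : Set X) (hXl : MeasurableSet Xl) (hXlfin : μ Xl ≠ ∞)
    (m : ℕ) (f : X → ℝ) (hf : MemLp f 2 μ) :
    -- the Galerkin projection `π_m f`
    let πm : X → ℝ := fun x => ∑ i ∈ Finset.range m, (∫ y, f y * φ i y ∂μ) * φ i x
    -- dyadic level sets of `φ i`, including the two tail sets
    let level : ℕ → ℕ → ℤ → Set X := fun i k j =>
      if j = (2 : ℤ) ^ (2 * k) then {x | (2 : ℝ) ^ k < φ i x}
      else if j = -((2 : ℤ) ^ (2 * k)) - 1 then {x | φ i x ≤ -((2 : ℝ) ^ k)}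
      else {x | (j : ℝ) / 2 ^ k < φ i x ∧ φ i x ≤ ((j : ℝ) + 1) / 2 ^ k}
    -- the cells of the partition `P_{m,k}` generated by `φ 0, …, φ (m-1)`
    let cell : ℕ → (Fin m → ℤ) → Set X := fun k j => ⋂ i : Fin m, level i.1 k (j i)
    let cellIdx : ℕ → Finset (Fin m → ℤ) := fun k =>
      Fintype.piFinset fun _ => Finset.Icc (-((2 : ℤ) ^ (2 * k)) - 1) ((2 : ℤ) ^ (2 * k))
    -- the average of `π_m f` over a cell, with respect to `μ_l = μ(· ∩ X_l)`
    let α : ℕ → (Fin m → ℤ) → ℝ := fun k j =>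
      (μ (cell k j ∩ Xl)).toReal⁻¹ * ∫ x in cell k j ∩ Xl, πm x ∂μ
    -- the piecewise constant projection `π_{m,l,k} f`
    let πmlk : ℕ → X → ℝ := fun k x =>
      ∑ j ∈ cellIdx k, (cell k j ∩ Xl).indicator (fun _ => α k j) x
    Tendsto (fun k => eLpNorm (fun x => πmlk k x - Xl.indicator πm x) 2 μ)
      atTop (nhds 0) := by
  intro πm level cell cellIdx α πmlk
  classical
  set C : ℝ := ∑ i ∈ Finset.range m, |∫ y, f y * φ i y ∂μ| with hC
  have hg_meas : Measurable πm := by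
    unfold πm
    exact Finset.measurable_sum _ fun i _ => (hφmeas i).const_mul _
  have hg_mem : MemLp πm 2 μ := by
    unfold πm
    exact memLp_finset_sum _ fun i _ => (hφL2 i).const_mul _
  -- membership in level sets is dyadProp
  have hmem_iff : ∀ (i : ℕ) (k : ℕ) (a : ℤ) (x : X),
      x ∈ level i k a ↔ dyadProp k a (φ i x) := by
    intro i k a x
    unfold level
    unfold dyadProp
    beta_reduce
    split_ifs <;> exact Iff.rfl
  have hcell_meas : ∀ k j, MeasurableSet (cell k j) := by
    intro k j
    unfold cell
    refine MeasurableSet.iInter fun i => ?_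
    have heq : level i.1 k (j i) = φ i.1 ⁻¹' {r : ℝ | dyadProp k (j i) r} :=
      Set.ext fun x => hmem_iff i.1 k (j i) x
    rw [heq]
    exact (hφmeas i.1) (measurableSet_dyadProp k (j i))
  have hS_meas : ∀ k j, MeasurableSet (cell k j ∩ Xl) := fun k j => (hcell_meas k j).inter hXl
  -- covering and uniqueness
  have hcover : ∀ k x, ∃ j ∈ cellIdx k, x ∈ cell k j := by
    intro k x
    refine ⟨fun i => dyadIdx k (φ i.1 x), ?_, ?_⟩
    · unfold cellIdx
      rw [Fintype.mem_piFinset]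
      intro i
      exact dyadIdx_mem_Icc k (φ i.1 x)
    · unfold cell
      exact Set.mem_iInter.2 fun i => (hmem_iff _ _ _ _).2 (dyadProp_dyadIdx k (φ i.1 x))
  have huniq : ∀ k a, a ∈ cellIdx k → ∀ x, x ∈ cell k a →
      a = fun i : Fin m => dyadIdx k (φ i.1 x) := by
    intro k a ha x hx
    funext i
    have hai : a i ∈ Finset.Icc (-(2^(2*k))-1 : ℤ) (2^(2*k)) := by
      unfold cellIdx at ha
      exact Fintype.mem_piFinset.1 ha i
    have hxl : x ∈ level i.1 k (a i) := by
      unfold cell at hx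
      exact Set.mem_iInter.1 hx i
    exact dyadProp_unique k (a i) (φ i.1 x) hai ((hmem_iff _ _ _ _).1 hxl)
  have hPD : ∀ k, Set.PairwiseDisjoint ↑(cellIdx k) (fun j => cell k j ∩ Xl) := by
    intro k a ha b hb hne
    refine Set.disjoint_left.2 fun {x} hxa hxb => hne ?_
    rw [huniq k a ha x hxa.1, huniq k b hb x hxb.1]
  -- the density measure and the tail sets
  set ν : Measure X := μ.withDensity (fun x => ((‖πm x‖₊ : ℝ≥0∞))^2) with hνdef
  have hν_eq : ∀ s : Set X, MeasurableSet s →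
      ν s = ∫⁻ x in s, ((‖πm x‖₊ : ℝ≥0∞))^2 ∂μ := by
    intro s hs
    rw [hνdef, withDensity_apply _ hs]
  have hν_fin : ν Set.univ ≠ ∞ := by
    have h2 := lintegral_rpow_enorm_lt_top_of_eLpNorm_lt_top (μ := μ) (f := πm) (p := 2)
      two_ne_zero ENNReal.ofNat_ne_top hg_mem.2
    rw [hν_eq _ MeasurableSet.univ, Measure.restrict_univ]
    refine ne_of_lt (lt_of_le_of_lt (le_of_eq ?_) h2)
    refine lintegral_congr fun x => ?_
    rw [show ((2:ℝ≥0∞)).toReal = (2:ℝ) by norm_num, rpow_two']; rfl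
  set T : ℕ → Set X := fun k => ⋃ i : Fin m, {x | (2:ℝ)^k ≤ |φ i.1 x|} with hTdef
  have hT_meas : ∀ k, MeasurableSet (T k) := by
    intro k
    exact MeasurableSet.iUnion fun i => measurableSet_le measurable_const (hφmeas i.1).abs
  have hT_anti : Antitone T := by
    intro k k' hkk' x hx
    obtain ⟨i, hi⟩ := Set.mem_iUnion.1 hx
    have hi' : (2:ℝ)^k' ≤ |φ i.1 x| := hi
    exact Set.mem_iUnion.2 ⟨i, show (2:ℝ)^k ≤ |φ i.1 x| from
      le_trans (pow_le_pow_right₀ one_le_two hkk') hi'⟩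
  have hT_empty : (⋂ k, T k) = ∅ := by
    ext x
    simp only [hTdef, Set.mem_iInter, Set.mem_iUnion, Set.mem_setOf_eq,
      Set.mem_empty_iff_false, iff_false]
    intro h
    obtain ⟨i0, _⟩ := h 0
    obtain ⟨k, hk⟩ := pow_unbounded_of_one_lt
      (Finset.univ.sup' ⟨i0, Finset.mem_univ _⟩ fun i : Fin m => |φ i.1 x|) one_lt_two
    obtain ⟨i, hi⟩ := h k
    have hle := Finset.le_sup' (fun i : Fin m => |φ i.1 x|) (Finset.mem_univ i)
    linarith
  have hν_T : Tendsto (fun k => ν (T k)) atTop (𝓝 0) := by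
    have h := tendsto_measure_iInter_atTop (μ := ν)
      (fun k => (hT_meas k).nullMeasurableSet) hT_anti
      ⟨0, ne_top_of_le_ne_top hν_fin (measure_mono (Set.subset_univ _))⟩
    rw [hT_empty, measure_empty] at h
    exact h
  have hν_tendsto : Tendsto (fun k => ν (T k ∩ Xl)) atTop (𝓝 0) :=
    tendsto_of_tendsto_of_tendsto_of_le_of_le tendsto_const_nhds hν_T
      (fun k => zero_le) (fun k => measure_mono Set.inter_subset_left)
  -- the key estimate
  have key : ∀ k, (∫⁻ x, ((‖πmlk k x - Xl.indicator πm x‖₊ : ℝ≥0∞))^2 ∂μ)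
      ≤ ENNReal.ofReal (C/2^k)^2 * μ Xl + 8 * ν (T k ∩ Xl) := by
    intro k
    have hLpos : (0:ℤ) < 2^(2*k) := by positivity
    -- pointwise identity
    have hpt : ∀ x, ((‖πmlk k x - Xl.indicator πm x‖₊ : ℝ≥0∞))^2
        = ∑ j ∈ cellIdx k, (cell k j ∩ Xl).indicator
            (fun x => ((‖α k j - πm x‖₊ : ℝ≥0∞))^2) x := by
      intro x
      by_cases hx : x ∈ Xl
      · obtain ⟨j₀, hj₀, hxj₀⟩ := hcover k x
        have hself : ∀ j ∈ cellIdx k, j ≠ j₀ → x ∉ cell k j := by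
          intro j hj hne hxj
          exact hne ((huniq k j hj x hxj).trans (huniq k j₀ hj₀ x hxj₀).symm)
        have h1 : πmlk k x = α k j₀ := by
          unfold πmlk
          beta_reduce
          rw [Finset.sum_eq_single_of_mem j₀ hj₀
            (fun j hj hne => Set.indicator_of_notMem (fun hmem => hself j hj hne hmem.1) _)]
          exact Set.indicator_of_mem (Set.mem_inter hxj₀ hx) _
        have h2 : (∑ j ∈ cellIdx k, (cell k j ∩ Xl).indicator
            (fun x => ((‖α k j - πm x‖₊ : ℝ≥0∞))^2) x) = ((‖α k j₀ - πm x‖₊ : ℝ≥0∞))^2 := by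
          rw [Finset.sum_eq_single_of_mem j₀ hj₀
            (fun j hj hne => Set.indicator_of_notMem (fun hmem => hself j hj hne hmem.1) _)]
          exact Set.indicator_of_mem (Set.mem_inter hxj₀ hx) _
        rw [h1, h2, Set.indicator_of_mem hx]
      · have h1 : πmlk k x = 0 := by
          unfold πmlk
          beta_reduce
          exact Finset.sum_eq_zero fun j hj =>
            Set.indicator_of_notMem (fun hmem => hx hmem.2) _
        have h2 : (∑ j ∈ cellIdx k, (cell k j ∩ Xl).indicator
            (fun x => ((‖α k j - πm x‖₊ : ℝ≥0∞))^2) x) = 0 :=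
          Finset.sum_eq_zero fun j hj =>
            Set.indicator_of_notMem (fun hmem => hx hmem.2) _
        rw [h1, h2, Set.indicator_of_notMem hx]
        simp
    have hmeasj : ∀ j ∈ cellIdx k, Measurable ((cell k j ∩ Xl).indicator
        (fun x => ((‖α k j - πm x‖₊ : ℝ≥0∞))^2)) := fun j _ =>
      (((measurable_const.sub hg_meas).enorm).pow_const 2).indicator (hS_meas k j)
    rw [lintegral_congr hpt, lintegral_finset_sum _ hmeasj]
    have hterm : ∀ j ∈ cellIdx k, (∫⁻ x, (cell k j ∩ Xl).indicator
        (fun x => ((‖α k j - πm x‖₊ : ℝ≥0∞))^2) x ∂μ)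
        = ∫⁻ x in cell k j ∩ Xl, ((‖α k j - πm x‖₊ : ℝ≥0∞))^2 ∂μ := fun j _ =>
      lintegral_indicator (hS_meas k j) _
    rw [Finset.sum_congr rfl hterm]
    -- split into inner and tail indices
    set inner : Finset (Fin m → ℤ) :=
      Fintype.piFinset (fun _ : Fin m => Finset.Icc (-(2^(2*k))) (2^(2*k)-1)) with hinner
    have hsub : inner ⊆ cellIdx k := by
      intro j hj
      rw [hinner, Fintype.mem_piFinset] at hj
      unfold cellIdx
      beta_reduce
      rw [Fintype.mem_piFinset]
      intro i
      have h := hj i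
      rw [Finset.mem_Icc] at h ⊢
      omega
    rw [← Finset.sum_sdiff hsub, add_comm (ENNReal.ofReal (C/2^k)^2 * μ Xl)]
    have hμS_fin : ∀ j : Fin m → ℤ, μ (cell k j ∩ Xl) ≠ ∞ := fun j =>
      ne_top_of_le_ne_top hXlfin (measure_mono Set.inter_subset_right)
    refine add_le_add ?_ ?_
    · -- tail part
      have htail_le : ∀ j ∈ cellIdx k \ inner,
          (∫⁻ x in cell k j ∩ Xl, ((‖α k j - πm x‖₊ : ℝ≥0∞))^2 ∂μ)
            ≤ 8 * ν (cell k j ∩ Xl) := by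
        intro j hj
        by_cases h0 : μ (cell k j ∩ Xl) = 0
        · rw [setLIntegral_measure_zero _ _ h0]; exact zero_le
        · have hfin := hμS_fin j
          have hα : ((‖α k j‖₊ : ℝ≥0∞))
              ≤ (μ (cell k j ∩ Xl))⁻¹ * ∫⁻ x in cell k j ∩ Xl, (‖πm x‖₊ : ℝ≥0∞) ∂μ := by
            unfold α
            exact enorm_avg_le' h0 hfin _
          have hCS : (∫⁻ x in cell k j ∩ Xl, (‖πm x‖₊ : ℝ≥0∞) ∂μ)^2
              ≤ ν (cell k j ∩ Xl) * μ (cell k j ∩ Xl) := by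
            have h := sq_setLintegral_le (μ := μ) (F := fun x => (‖πm x‖₊ : ℝ≥0∞)) (cell k j ∩ Xl) hg_meas.enorm
            rwa [← hν_eq _ (hS_meas k j)] at h
          have hαsq : ((‖α k j‖₊ : ℝ≥0∞))^2 * μ (cell k j ∩ Xl) ≤ ν (cell k j ∩ Xl) := by
            calc ((‖α k j‖₊ : ℝ≥0∞))^2 * μ (cell k j ∩ Xl)
                ≤ ((μ (cell k j ∩ Xl))⁻¹ * ∫⁻ x in cell k j ∩ Xl, (‖πm x‖₊ : ℝ≥0∞) ∂μ)^2
                  * μ (cell k j ∩ Xl) := by gcongr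
              _ = (μ (cell k j ∩ Xl))⁻¹^2 * (∫⁻ x in cell k j ∩ Xl, (‖πm x‖₊ : ℝ≥0∞) ∂μ)^2
                  * μ (cell k j ∩ Xl) := by rw [mul_pow]
              _ ≤ (μ (cell k j ∩ Xl))⁻¹^2 * (ν (cell k j ∩ Xl) * μ (cell k j ∩ Xl))
                  * μ (cell k j ∩ Xl) := by gcongr
              _ = ν (cell k j ∩ Xl) * ((μ (cell k j ∩ Xl))⁻¹ * μ (cell k j ∩ Xl))^2 := by ring
              _ = ν (cell k j ∩ Xl) := by
                  rw [ENNReal.inv_mul_cancel h0 hfin, one_pow, mul_one]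
          calc (∫⁻ x in cell k j ∩ Xl, ((‖α k j - πm x‖₊ : ℝ≥0∞))^2 ∂μ)
              ≤ ∫⁻ x in cell k j ∩ Xl,
                  4 * (((‖α k j‖₊ : ℝ≥0∞))^2 + ((‖πm x‖₊ : ℝ≥0∞))^2) ∂μ := by
                refine setLIntegral_mono
                  ((measurable_const.add (hg_meas.enorm.pow_const 2)).const_mul 4)
                  fun x _ => ?_
                calc ((‖α k j - πm x‖₊ : ℝ≥0∞))^2
                    ≤ (((‖α k j‖₊ : ℝ≥0∞)) + ((‖πm x‖₊ : ℝ≥0∞)))^2 := by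
                      gcongr
                      exact_mod_cast nnnorm_sub_le _ _
                  _ ≤ 4 * (((‖α k j‖₊ : ℝ≥0∞))^2 + ((‖πm x‖₊ : ℝ≥0∞))^2) := sq_add_le' _ _
            _ = 4 * (((‖α k j‖₊ : ℝ≥0∞))^2 * μ (cell k j ∩ Xl)
                  + ∫⁻ x in cell k j ∩ Xl, ((‖πm x‖₊ : ℝ≥0∞))^2 ∂μ) := by
                rw [lintegral_const_mul (f := fun x => ((‖α k j‖₊ : ℝ≥0∞))^2 + ((‖πm x‖₊ : ℝ≥0∞))^2) _
                  (measurable_const.add (hg_meas.enorm.pow_const 2))]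
                congr 1
                rw [lintegral_add_left measurable_const, setLIntegral_const]
            _ = 4 * (((‖α k j‖₊ : ℝ≥0∞))^2 * μ (cell k j ∩ Xl) + ν (cell k j ∩ Xl)) := by
                rw [hν_eq _ (hS_meas k j)]
            _ ≤ 4 * (ν (cell k j ∩ Xl) + ν (cell k j ∩ Xl)) := by gcongr
            _ = 8 * ν (cell k j ∩ Xl) := by ring
      have hsubset : ∀ j ∈ cellIdx k \ inner, cell k j ∩ Xl ⊆ T k ∩ Xl := by
        intro j hj x hx
        rw [Finset.mem_sdiff] at hj
        obtain ⟨hj1, hj2⟩ := hj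
        have hex : ∃ i : Fin m, j i ∉ Finset.Icc (-(2^(2*k)) : ℤ) (2^(2*k)-1) := by
          by_contra h
          push_neg at h
          exact hj2 (by rw [hinner, Fintype.mem_piFinset]; exact h)
        obtain ⟨i, hi⟩ := hex
        have hji : j i ∈ Finset.Icc (-(2^(2*k))-1 : ℤ) (2^(2*k)) := by
          unfold cellIdx at hj1
          exact Fintype.mem_piFinset.1 hj1 i
        have hxl : x ∈ level i.1 k (j i) := by
          have hx1 := hx.1
          unfold cell at hx1
          exact Set.mem_iInter.1 hx1 i
        have htail : j i = 2^(2*k) ∨ j i = -(2^(2*k))-1 := by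
          rw [Finset.mem_Icc] at hji hi
          omega
        refine ⟨Set.mem_iUnion.2 ⟨i, ?_⟩, hx.2⟩
        exact dyadProp_tail ((hmem_iff _ _ _ _).1 hxl) htail
      calc (∑ j ∈ cellIdx k \ inner, ∫⁻ x in cell k j ∩ Xl, ((‖α k j - πm x‖₊ : ℝ≥0∞))^2 ∂μ)
          ≤ ∑ j ∈ cellIdx k \ inner, 8 * ν (cell k j ∩ Xl) := Finset.sum_le_sum htail_le
        _ = 8 * ∑ j ∈ cellIdx k \ inner, ν (cell k j ∩ Xl) := by rw [Finset.mul_sum]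
        _ = 8 * ν (⋃ j ∈ cellIdx k \ inner, cell k j ∩ Xl) := by
            rw [measure_biUnion_finset ((hPD k).subset
              (Finset.coe_subset.2 Finset.sdiff_subset)) (fun j _ => hS_meas k j)]
        _ ≤ 8 * ν (T k ∩ Xl) := by
            gcongr
            exact Set.iUnion₂_subset hsubset
    · -- inner part
      have hterm_le : ∀ j ∈ inner, (∫⁻ x in cell k j ∩ Xl, ((‖α k j - πm x‖₊ : ℝ≥0∞))^2 ∂μ)
          ≤ ENNReal.ofReal (C/2^k)^2 * μ (cell k j ∩ Xl) := by
        intro j hj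
        by_cases h0 : μ (cell k j ∩ Xl) = 0
        · rw [setLIntegral_measure_zero _ _ h0]
          exact zero_le
        · have hfin := hμS_fin j
          have hmid : ∀ (i : Fin m) x, x ∈ cell k j →
              ((j i : ℝ))/2^k < φ i.1 x ∧ φ i.1 x ≤ ((j i : ℝ)+1)/2^k := by
            intro i x hxc
            have hji : j i ∈ Finset.Icc (-(2^(2*k)) : ℤ) (2^(2*k)-1) := by
              rw [hinner, Fintype.mem_piFinset] at hj
              exact hj i
            rw [Finset.mem_Icc] at hji
            have hxl : x ∈ level i.1 k (j i) := by
              unfold cell at hxc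
              exact Set.mem_iInter.1 hxc i
            exact dyadProp_mid (by omega) (by omega) ((hmem_iff _ _ _ _).1 hxl)
          have hosc : ∀ u ∈ cell k j ∩ Xl, ∀ v ∈ cell k j ∩ Xl, |πm u - πm v| ≤ C/2^k := by
            intro u hu v hv
            unfold πm
            beta_reduce
            rw [← Finset.sum_sub_distrib]
            calc |∑ i ∈ Finset.range m,
                  ((∫ y, f y * φ i y ∂μ) * φ i u - (∫ y, f y * φ i y ∂μ) * φ i v)|
                ≤ ∑ i ∈ Finset.range m,
                  |(∫ y, f y * φ i y ∂μ) * φ i u - (∫ y, f y * φ i y ∂μ) * φ i v| :=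
                  Finset.abs_sum_le_sum_abs _ _
              _ ≤ ∑ i ∈ Finset.range m, |∫ y, f y * φ i y ∂μ| * (1/2^k) := by
                  refine Finset.sum_le_sum fun i hi => ?_
                  rw [← mul_sub, abs_mul]
                  refine mul_le_mul_of_nonneg_left ?_ (abs_nonneg _)
                  exact dyad_osc (hmid ⟨i, Finset.mem_range.1 hi⟩ u hu.1)
                    (hmid ⟨i, Finset.mem_range.1 hi⟩ v hv.1)
              _ = C/2^k := by rw [← Finset.sum_mul, ← hC, mul_one_div]
          have hint : IntegrableOn πm (cell k j ∩ Xl) μ := by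
            have hfm : IsFiniteMeasure (μ.restrict (cell k j ∩ Xl)) := by
              constructor
              rw [Measure.restrict_apply_univ]
              exact lt_of_le_of_ne le_top hfin
            exact (hg_mem.restrict _).integrable one_le_two
          have hpw : ∀ x ∈ cell k j ∩ Xl,
              ((‖α k j - πm x‖₊ : ℝ≥0∞))^2 ≤ (ENNReal.ofReal (C/2^k))^2 := by
            intro x hx
            have habs : |α k j - πm x| ≤ C/2^k := by
              unfold α
              exact avg_dist_le' (hS_meas k j) h0 hfin hint hx (fun u hu => hosc u hu x hx)
            rw [← enorm_eq_nnnorm, Real.enorm_eq_ofReal_abs]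
            gcongr
          calc (∫⁻ x in cell k j ∩ Xl, ((‖α k j - πm x‖₊ : ℝ≥0∞))^2 ∂μ)
              ≤ ∫⁻ _x in cell k j ∩ Xl, (ENNReal.ofReal (C/2^k))^2 ∂μ :=
                setLIntegral_mono measurable_const hpw
            _ = ENNReal.ofReal (C/2^k)^2 * μ (cell k j ∩ Xl) := setLIntegral_const _ _
      calc (∑ j ∈ inner, ∫⁻ x in cell k j ∩ Xl, ((‖α k j - πm x‖₊ : ℝ≥0∞))^2 ∂μ)
          ≤ ∑ j ∈ inner, ENNReal.ofReal (C/2^k)^2 * μ (cell k j ∩ Xl) :=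
            Finset.sum_le_sum hterm_le
        _ = ENNReal.ofReal (C/2^k)^2 * ∑ j ∈ inner, μ (cell k j ∩ Xl) := by
            rw [Finset.mul_sum]
        _ ≤ ENNReal.ofReal (C/2^k)^2 * μ Xl := by
            gcongr
            rw [← measure_biUnion_finset ((hPD k).subset (Finset.coe_subset.2 hsub))
              (fun j _ => hS_meas k j)]
            exact measure_mono (Set.iUnion₂_subset fun j _ => Set.inter_subset_right)
  -- convergence
  have hA : Tendsto (fun k => ∫⁻ x, ((‖πmlk k x - Xl.indicator πm x‖₊ : ℝ≥0∞))^2 ∂μ)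
      atTop (𝓝 0) := by
    have hB1 : Tendsto (fun k : ℕ => ENNReal.ofReal (C/2^k)^2 * μ Xl) atTop (𝓝 0) := by
      have h1 : Tendsto (fun k : ℕ => C / 2^k) atTop (𝓝 0) :=
        Tendsto.div_atTop tendsto_const_nhds (tendsto_pow_atTop_atTop_of_one_lt one_lt_two)
      have h2 : Tendsto (fun k : ℕ => ENNReal.ofReal (C/2^k)^2) atTop (𝓝 0) := by
        have := ENNReal.Tendsto.pow (n := 2) (ENNReal.tendsto_ofReal (α := ℕ) (f := atTop) h1)
        simpa using this
      have := ENNReal.Tendsto.mul_const h2 (Or.inr hXlfin)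
      simpa using this
    have hB2 : Tendsto (fun k => 8 * ν (T k ∩ Xl)) atTop (𝓝 0) := by
      have := ENNReal.Tendsto.const_mul hν_tendsto (Or.inr (by norm_num : (8:ℝ≥0∞) ≠ ∞))
      simpa using this
    have hB := hB1.add hB2
    rw [add_zero] at hB
    exact tendsto_of_tendsto_of_tendsto_of_le_of_le tendsto_const_nhds hB
      (fun k => zero_le) key
  have heq : ∀ k, eLpNorm (fun x => πmlk k x - Xl.indicator πm x) 2 μ
      = (∫⁻ x, ((‖πmlk k x - Xl.indicator πm x‖₊ : ℝ≥0∞))^2 ∂μ) ^ (1/(2:ℝ)) := by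
    intro k
    rw [eLpNorm_eq_lintegral_rpow_enorm_toReal two_ne_zero ENNReal.ofNat_ne_top]
    congr 1
    · refine lintegral_congr fun x => ?_
      rw [show ((2:ℝ≥0∞)).toReal = (2:ℝ) by norm_num, rpow_two']; rfl
  simp_rw [heq]
  have := Filter.Tendsto.ennrpow_const (1/(2:ℝ)) hA
  rwa [ENNReal.zero_rpow_of_pos (by norm_num)] at this
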